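/- Suppose the primal feasible set P(x) = {u ∈ ℝ^n : u ≥ 0, Du ≤ b − Cx} is nonempty for every x in a set X ⊆ ℝ^p, and the dual feasible set {π ∈ ℝ^m : π ≤ 0, Dᵀπ ≤ c} is nonempty. Then the optimal value function h(x) := inf{⟨c, u⟩ : u ∈ P(x)} is finite on X and there exists a constant L > 0, depending only on c, C and D, such that |h(x) − h(x')| ≤ L‖x − x'‖ for all x, x' ∈ X. -/

import Mathlib

local notation "⟪" x ", " y "⟫" => inner (𝕜 := ℝ) x y


open Finset

section Cone

variable {V : Type*} [NormedAddCommGroup V] [NormedSpace ℝ V]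
variable {ι : Type*} [Fintype ι]

/-- Reduction step for conic Carathéodory. -/
lemma conic_step (g : ι → V) (a lam : ι → ℝ) (ha : ∀ i, 0 ≤ a i)
    (hsupp : ∀ i, a i = 0 → lam i = 0) (hsum : ∑ i, lam i • g i = 0)
    (hpos : ∃ i, 0 < lam i) :
    ∃ b : ι → ℝ, (∀ i, 0 ≤ b i) ∧ (∑ i, b i • g i = ∑ i, a i • g i) ∧
      (univ.filter (fun i => b i ≠ 0)).card < (univ.filter (fun i => a i ≠ 0)).card := by
  classical
  obtain ⟨i₁, hi₁⟩ := hpos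
  have hTne : (univ.filter (fun i => 0 < lam i)).Nonempty := ⟨i₁, by simpa using hi₁⟩
  obtain ⟨i₀, hi₀mem, hi₀min⟩ := Finset.exists_min_image _ (fun i => a i / lam i) hTne
  have hlam₀ : 0 < lam i₀ := by simpa using hi₀mem
  set t : ℝ := a i₀ / lam i₀ with ht
  have ht0 : 0 ≤ t := div_nonneg (ha i₀) hlam₀.le
  refine ⟨fun i => a i - t * lam i, ?_, ?_, ?_⟩
  · intro i
    by_cases h : 0 < lam i
    · have := hi₀min i (by simpa using h)
      have : t * lam i ≤ a i := by
        rw [← le_div_iff₀ h]; exact this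
      dsimp only; linarith
    · push_neg at h
      have : t * lam i ≤ 0 := mul_nonpos_of_nonneg_of_nonpos ht0 h
      have := ha i
      dsimp only; linarith
  · have : ∑ i, (a i - t * lam i) • g i
        = ∑ i, a i • g i - t • ∑ i, lam i • g i := by
      rw [Finset.smul_sum, ← Finset.sum_sub_distrib]
      congr 1; funext i
      rw [sub_smul, smul_smul]
    rw [this, hsum, smul_zero, sub_zero]
  · apply Finset.card_lt_card
    constructor
    · intro i hi
      simp only [mem_filter, mem_univ, true_and] at hi ⊢
      intro hai
      exact hi (by rw [hai, hsupp i hai, mul_zero, sub_zero])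
    · intro hsub
      have hia : a i₀ ≠ 0 := by
        intro h0
        have := hsupp i₀ h0
        rw [this] at hlam₀; exact lt_irrefl _ hlam₀
      have : i₀ ∈ univ.filter (fun i => a i - t * lam i ≠ 0) :=
        hsub (by simpa using hia)
      simp only [mem_filter, mem_univ, true_and] at this
      exact this (by rw [ht, div_mul_cancel₀ _ hlam₀.ne', sub_self])

/-- Conic Carathéodory: any nonnegative combination can be rewritten with
linearly independent support. -/
lemma conic_cara (g : ι → V) :
    ∀ (k : ℕ) (a : ι → ℝ), (univ.filter (fun i => a i ≠ 0)).card ≤ k →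
      (∀ i, 0 ≤ a i) →
      ∃ b : ι → ℝ, (∀ i, 0 ≤ b i) ∧ (∑ i, b i • g i = ∑ i, a i • g i) ∧
        LinearIndependent ℝ (fun i : {i : ι // b i ≠ 0} => g i) := by
  classical
  intro k
  induction k with
  | zero =>
    intro a hcard ha
    have hall : ∀ i, a i = 0 := by
      intro i
      by_contra h
      have : i ∈ univ.filter (fun i => a i ≠ 0) := by simpa using h
      have := Finset.card_pos.2 ⟨i, this⟩
      omega
    have : IsEmpty {i : ι // a i ≠ 0} := ⟨fun i => i.2 (hall i.1)⟩
    exact ⟨a, ha, rfl, linearIndependent_empty_type⟩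
  | succ k ih =>
    intro a hcard ha
    by_cases hli : LinearIndependent ℝ (fun i : {i : ι // a i ≠ 0} => g i)
    · exact ⟨a, ha, rfl, hli⟩
    · obtain ⟨cc, hccsum, i₀, hi₀⟩ := Fintype.not_linearIndependent_iff.1 hli
      set lam : ι → ℝ := fun i => if h : a i ≠ 0 then cc ⟨i, h⟩ else 0 with hlam
      have hsupp : ∀ i, a i = 0 → lam i = 0 := by
        intro i h; simp [hlam, h]
      have hlamsum : ∑ i, lam i • g i = 0 := by
        rw [← hccsum]
        rw [← Finset.sum_filter_of_ne (p := fun i => a i ≠ 0)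
          (fun i _ h => by intro hai; exact h (by simp [hlam, hai]))]
        rw [Finset.sum_subtype (univ.filter (fun i => a i ≠ 0))
          (p := fun i => a i ≠ 0) (by simp) (fun i => lam i • g i)]
        congr 1; funext i
        simp [hlam, i.2]
      have hlamne : lam i₀.1 ≠ 0 := by simp [hlam, i₀.2, hi₀]
      have hkey : ∃ b : ι → ℝ, (∀ i, 0 ≤ b i) ∧
          (∑ i, b i • g i = ∑ i, a i • g i) ∧
          (univ.filter (fun i => b i ≠ 0)).card < (univ.filter (fun i => a i ≠ 0)).card := by
        rcases lt_or_gt_of_ne hlamne with hneg | hpos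
        · exact conic_step g a (fun i => -lam i) ha
            (fun i h => by simp only [hsupp i h, neg_zero])
            (by simp only [neg_smul, Finset.sum_neg_distrib, hlamsum, neg_zero])
            ⟨i₀.1, by simpa using hneg⟩
        · exact conic_step g a lam ha hsupp hlamsum ⟨i₀.1, hpos⟩
      obtain ⟨b, hb, hbsum, hbcard⟩ := hkey
      obtain ⟨b', hb', hb'sum, hb'li⟩ := ih b (by omega) hb
      exact ⟨b', hb', hb'sum.trans hbsum, hb'li⟩

end Cone


open Finset

section Cone2

variable {V : Type*} [NormedAddCommGroup V] [NormedSpace ℝ V] [FiniteDimensional ℝ V]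
variable {ι : Type*} [Fintype ι]


lemma cone_isClosed (g : ι → V) :
    IsClosed {z : V | ∃ a : ι → ℝ, (∀ i, 0 ≤ a i) ∧ z = ∑ i, a i • g i} := by
  classical
  have key : {z : V | ∃ a : ι → ℝ, (∀ i, 0 ≤ a i) ∧ z = ∑ i, a i • g i}
      = ⋃ (S : {S : Finset ι // LinearIndependent ℝ (fun i : S => (g i : V))}),
        {z : V | ∃ a : ι → ℝ, (∀ i, 0 ≤ a i) ∧ (∀ i, a i ≠ 0 → i ∈ S.1) ∧
          z = ∑ i, a i • g i} := by
    ext z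
    simp only [Set.mem_setOf_eq, Set.mem_iUnion]
    constructor
    · rintro ⟨a, ha, rfl⟩
      obtain ⟨b, hb, hbsum, hbli⟩ := conic_cara g _ a le_rfl ha
      set S : Finset ι := univ.filter (fun i => b i ≠ 0) with hS
      have hmem : ∀ i : ι, i ∈ S ↔ b i ≠ 0 := by intro i; simp [hS]
      have hli : LinearIndependent ℝ (fun i : S => (g i : V)) := by
        let e : {i : ι // i ∈ S} ≃ {i : ι // b i ≠ 0} :=
          Equiv.subtypeEquivRight (fun i => by simp [hS])
        have h2 := (linearIndependent_equiv e).mpr hbli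
        have : (fun i : {i : ι // b i ≠ 0} => (g i : V)) ∘ e
            = fun i : S => (g i : V) := by
          funext x
          simp only [e, Function.comp_apply, Equiv.subtypeEquivRight_apply]
        rwa [this] at h2
      exact ⟨⟨S, hli⟩, b, hb, fun i hi => (hmem i).2 hi, hbsum.symm⟩
    · rintro ⟨S, a, ha, _, rfl⟩
      exact ⟨a, ha, rfl⟩
  rw [key]
  apply isClosed_iUnion_of_finite
  rintro ⟨S, hS⟩
  -- this set is the image of the nonneg orthant under an injective linear map
  let φ : ({i : ι // i ∈ S} → ℝ) →ₗ[ℝ] V :=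
    { toFun := fun aa => ∑ i : S, aa i • g (i : ι)
      map_add' := by
        intro x y; simp [add_smul, Finset.sum_add_distrib]
      map_smul' := by
        intro t x; simp [smul_smul, Finset.smul_sum] }
  have hker : LinearMap.ker φ = ⊥ := by
    rw [LinearMap.ker_eq_bot']
    intro aa haa
    funext i
    exact Fintype.linearIndependent_iff.1 hS aa haa i
  have hemb := LinearMap.isClosedEmbedding_of_injective (𝕜 := ℝ) (f := φ) hker
  have himg : {z : V | ∃ a : ι → ℝ, (∀ i, 0 ≤ a i) ∧ (∀ i, a i ≠ 0 → i ∈ S) ∧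
      z = ∑ i, a i • g i} = φ '' {aa | ∀ i, 0 ≤ aa i} := by
    ext z
    simp only [Set.mem_setOf_eq, Set.mem_image]
    constructor
    · rintro ⟨a, ha, hsupp, rfl⟩
      refine ⟨fun i => a i.1, fun i => ha i.1, ?_⟩
      show ∑ i : {i : ι // i ∈ S}, a i.1 • g i.1 = ∑ i, a i • g i
      rw [← Finset.sum_subset (Finset.subset_univ S)
        (fun i _ hi => by
          have : a i = 0 := by by_contra h; exact hi (hsupp i h)
          simp [this])]
      exact Finset.sum_coe_sort S (fun i => a i • g i)
    · rintro ⟨aa, haa, rfl⟩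
      refine ⟨fun i => if h : i ∈ S then aa ⟨i, h⟩ else 0, ?_, ?_, ?_⟩
      · intro i; by_cases h : i ∈ S <;> simp [h, haa]
      · intro i hi; by_cases h : i ∈ S
        · exact h
        · simp [h] at hi
      · show φ aa = _
        show ∑ i : {i : ι // i ∈ S}, aa i • g i.1
          = ∑ i : ι, (if h : i ∈ S then aa ⟨i, h⟩ else 0) • g i
        rw [← Finset.sum_subset (Finset.subset_univ S)
          (fun i _ hi => by simp [hi])]
        rw [← Finset.sum_coe_sort S (fun i => (if h : i ∈ S then aa ⟨i, h⟩ else 0) • g i)]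
        apply Finset.sum_congr rfl
        intro i _
        rw [dif_pos i.2]
  rw [himg]
  apply hemb.isClosedMap
  have : {aa : {i : ι // i ∈ S} → ℝ | ∀ i, 0 ≤ aa i} = ⋂ i, {aa | 0 ≤ aa i} := by
    ext; simp [Set.mem_iInter]
  rw [this]
  exact isClosed_iInter (fun i => isClosed_le continuous_const (continuous_apply i))

end Cone2


open Finset


lemma cone_separation {V : Type*} [NormedAddCommGroup V] [NormedSpace ℝ V]
    [FiniteDimensional ℝ V] {ι : Type*} [Fintype ι] (g : ι → V) {z : V}
    (hz : z ∉ {z : V | ∃ a : ι → ℝ, (∀ i, 0 ≤ a i) ∧ z = ∑ i, a i • g i}) :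
    ∃ f : V →L[ℝ] ℝ, (∀ i, f (g i) ≤ 0) ∧ 0 < f z := by
  classical
  set C := {z : V | ∃ a : ι → ℝ, (∀ i, 0 ≤ a i) ∧ z = ∑ i, a i • g i} with hC
  have hconv : Convex ℝ C := by
    rintro w ⟨a, ha, rfl⟩ w' ⟨a', ha', rfl⟩ s t hs ht hst
    refine ⟨fun i => s * a i + t * a' i,
      fun i => add_nonneg (mul_nonneg hs (ha i)) (mul_nonneg ht (ha' i)), ?_⟩
    rw [Finset.smul_sum, Finset.smul_sum, ← Finset.sum_add_distrib]
    congr 1; funext i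
    rw [add_smul, smul_smul, smul_smul]
  obtain ⟨f, u, hfu, huz⟩ := geometric_hahn_banach_closed_point hconv (cone_isClosed g) hz
  have h0C : (0 : V) ∈ C := ⟨fun _ => 0, fun _ => le_rfl, by simp⟩
  have hu0 : 0 < u := by simpa using hfu 0 h0C
  refine ⟨f, ?_, by linarith⟩
  intro i
  by_contra hcon
  push_neg at hcon
  have hmem : ∀ s : ℝ, 0 ≤ s → s • g i ∈ C := by
    intro s hs
    refine ⟨fun j => if j = i then s else 0, fun j => by dsimp only; split <;> simp [hs], ?_⟩
    rw [Finset.sum_eq_single i (fun j _ hj => by simp [hj]) (by simp)]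
    simp
  have hbig := hfu (((u + 1) / f (g i)) • g i)
    (hmem _ (div_nonneg (by linarith) hcon.le))
  rw [map_smul, smul_eq_mul, div_mul_cancel₀ _ (ne_of_gt hcon)] at hbig
  linarith


open Finset


section LP

variable {m n : ℕ} (D : Matrix (Fin m) (Fin n) ℝ) (c : Fin n → ℝ)

/-- weak-duality computation. -/
lemma lp_core {π v : Fin m → ℝ} {u : Fin n → ℝ} (hπ : ∀ j : Fin m, π j ≤ 0) (hu : ∀ i : Fin n, 0 ≤ u i)
    (hDu : ∀ j, D.mulVec u j ≤ v j) :
    ∑ j, v j * π j ≤ ∑ i, (∑ j, D j i * π j) * u i := by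
  have h1 : ∑ j, v j * π j ≤ ∑ j, D.mulVec u j * π j :=
    Finset.sum_le_sum (fun j _ => mul_le_mul_of_nonpos_right (hDu j) (hπ j))
  refine h1.trans_eq ?_
  simp only [Matrix.mulVec, dotProduct, Finset.sum_mul]
  rw [Finset.sum_comm]
  apply Finset.sum_congr rfl; intro i _
  apply Finset.sum_congr rfl; intro j _
  ring

/-- Farkas-type duality: if `γ` is strictly below every feasible value, there is a
dual feasible `π` with `γ < ⟨v, π⟩`. -/
lemma lp_exists_dual (v : Fin m → ℝ) (γ : ℝ)
    (hfeas : ∃ u : Fin n → ℝ, (∀ i, 0 ≤ u i) ∧ ∀ j, D.mulVec u j ≤ v j)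
    (hno : ¬ ∃ u : Fin n → ℝ, (∀ i, 0 ≤ u i) ∧ (∀ j, D.mulVec u j ≤ v j) ∧
      ∑ i, c i * u i ≤ γ) :
    ∃ π : Fin m → ℝ, (∀ j, π j ≤ 0) ∧ (∀ i, ∑ j, D j i * π j ≤ c i) ∧
      γ < ∑ j, v j * π j := by
  classical
  -- the finitely generated cone
  set gen : (Fin n ⊕ (Fin m ⊕ Unit)) → ((Fin m → ℝ) × ℝ) :=
    fun i => Sum.elim (fun i₁ => ((fun k => D k i₁), c i₁))
      (Sum.elim (fun i₂ => (Pi.single i₂ 1, 0)) (fun _ => (0, 1))) i with hgen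
  -- membership in cone gives a feasible point
  have hmem : ∀ z : (Fin m → ℝ) × ℝ,
      (∃ a : (Fin n ⊕ (Fin m ⊕ Unit)) → ℝ, (∀ i, 0 ≤ a i) ∧ z = ∑ i, a i • gen i) →
      ∃ u : Fin n → ℝ, (∀ i, 0 ≤ u i) ∧ (∀ j, D.mulVec u j ≤ z.1 j) ∧
        ∑ i, c i * u i ≤ z.2 := by
    rintro z ⟨a, ha, rfl⟩
    have h1 : ∀ j, (∑ i, a i • gen i).1 j
        = ∑ i₁, a (Sum.inl i₁) * D j i₁ + a (Sum.inr (Sum.inl j)) := by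
      intro j
      rw [Prod.fst_sum, Fintype.sum_sum_type, Fintype.sum_sum_type]
      simp only [hgen, Sum.elim_inl, Sum.elim_inr, Prod.smul_fst, Pi.add_apply,
        Finset.sum_apply, Pi.smul_apply, smul_eq_mul, Prod.fst_zero, mul_zero,
        Pi.single_apply, smul_zero, Finset.sum_ite_eq, Finset.mem_univ, if_true,
        mul_ite, mul_one]
      simp
    have h2 : (∑ i, a i • gen i).2
        = ∑ i₁, a (Sum.inl i₁) * c i₁ + a (Sum.inr (Sum.inr ())) := by
      rw [Prod.snd_sum, Fintype.sum_sum_type, Fintype.sum_sum_type]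
      simp [hgen]
    refine ⟨fun i₁ => a (Sum.inl i₁), fun i₁ => ha _, ?_, ?_⟩
    · intro j
      rw [h1 j]
      have : D.mulVec (fun i₁ => a (Sum.inl i₁)) j
          = ∑ i₁, a (Sum.inl i₁) * D j i₁ := by
        simp only [Matrix.mulVec, dotProduct]
        apply Finset.sum_congr rfl; intro i₁ _; ring
      rw [this]
      have := ha (Sum.inr (Sum.inl j))
      linarith
    · rw [h2]
      have h3 : ∑ i₁, c i₁ * a (Sum.inl i₁) = ∑ i₁, a (Sum.inl i₁) * c i₁ := by
        apply Finset.sum_congr rfl; intro i₁ _; ring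
      have := ha (Sum.inr (Sum.inr ()))
      linarith [h3]
  have hz : (v, γ) ∉ {z : (Fin m → ℝ) × ℝ |
      ∃ a : (Fin n ⊕ (Fin m ⊕ Unit)) → ℝ, (∀ i, 0 ≤ a i) ∧ z = ∑ i, a i • gen i} := by
    intro hzin
    exact hno (hmem _ hzin)
  obtain ⟨f, hfgen, hfz⟩ := cone_separation gen hz
  set π : Fin m → ℝ := fun j => f (Pi.single j 1, 0) with hπdef
  set β : ℝ := f (0, 1) with hβdef
  have hdecomp : ∀ (w : Fin m → ℝ) (r : ℝ), f (w, r) = ∑ j, w j * π j + r * β := by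
    intro w r
    have hwr : (w, r) = (∑ j, (w j) • ((Pi.single j 1 : Fin m → ℝ), (0:ℝ)))
        + r • ((0 : Fin m → ℝ), (1:ℝ)) := by
      have h1 : ((∑ j, (w j) • ((Pi.single j 1 : Fin m → ℝ), (0:ℝ)))
          + r • ((0 : Fin m → ℝ), (1:ℝ))).1 = w := by
        funext k
        simp [Prod.fst_sum, Finset.sum_apply, Pi.single_apply, Finset.sum_ite_eq]
      have h2 : ((∑ j, (w j) • ((Pi.single j 1 : Fin m → ℝ), (0:ℝ)))
          + r • ((0 : Fin m → ℝ), (1:ℝ))).2 = r := by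
        simp [Prod.snd_sum]
      exact Prod.ext h1.symm h2.symm
    rw [hwr, map_add, map_sum, map_smul]
    simp only [map_smul, smul_eq_mul]
    rfl
  have hβ : β ≤ 0 := by simpa [hgen] using hfgen (Sum.inr (Sum.inr ()))
  have hπ : ∀ j, π j ≤ 0 := fun j => by simpa [hgen] using hfgen (Sum.inr (Sum.inl j))
  have hcol : ∀ i₁ : Fin n, ∑ j, D j i₁ * π j + c i₁ * β ≤ 0 := by
    intro i₁
    have := hfgen (Sum.inl i₁)
    rw [hgen] at this
    simpa [hdecomp] using this
  have hobj : 0 < ∑ j, v j * π j + γ * β := by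
    have := hfz
    rw [hdecomp v γ] at this
    exact this
  rcases eq_or_lt_of_le hβ with hβ0 | hβneg
  · -- β = 0 : contradiction with primal feasibility
    exfalso
    obtain ⟨u₀, hu₀, hDu₀⟩ := hfeas
    have hcore := lp_core D (π := π) (u := u₀) (v := v) hπ hu₀ hDu₀
    have hvπ : 0 < ∑ j, v j * π j := by
      rw [hβ0] at hobj; simpa using hobj
    have : ∑ i, (∑ j, D j i * π j) * u₀ i ≤ 0 := by
      apply Finset.sum_nonpos
      intro i _
      apply mul_nonpos_of_nonpos_of_nonneg _ (hu₀ i)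
      have := hcol i
      rw [hβ0] at this
      simpa using this
    linarith
  · -- β < 0 : rescale
    set s : ℝ := -β with hs
    have hs0 : 0 < s := by simp [hs]; linarith
    refine ⟨fun j => π j / s, fun j => div_nonpos_of_nonpos_of_nonneg (hπ j) hs0.le,
      ?_, ?_⟩
    · intro i₁
      have h := hcol i₁
      have he : ∑ j, D j i₁ * (π j / s) = (∑ j, D j i₁ * π j) / s := by
        rw [Finset.sum_div]
        apply Finset.sum_congr rfl; intro j _; ring
      rw [he, div_le_iff₀ hs0]
      have : c i₁ * s = -(c i₁ * β) := by rw [hs]; ring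
      linarith
    · have he : ∑ j, v j * (π j / s) = (∑ j, v j * π j) / s := by
        rw [Finset.sum_div]
        apply Finset.sum_congr rfl; intro j _; ring
      rw [he, lt_div_iff₀ hs0]
      have : γ * s = -(γ * β) := by rw [hs]; ring
      linarith
end LP


open Finset

section Purify

variable {m : ℕ} {κ : Type*} [Fintype κ]


/-- basic feasible points: feasible with active constraints spanning everything -/
def Bset (A : κ → EuclideanSpace ℝ (Fin m)) (q : κ → ℝ) :
    Set (EuclideanSpace ℝ (Fin m)) :=
  {π | (∀ k, ⟪A k, π⟫ ≤ q k) ∧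
    Submodule.span ℝ (A '' {k | ⟪A k, π⟫ = q k}) = ⊤}

lemma inner_eq_zero_of_mem_span {S : Set (EuclideanSpace ℝ (Fin m))}
    {w : EuclideanSpace ℝ (Fin m)} (h : ∀ a ∈ S, ⟪a, w⟫ = (0:ℝ)) :
    ∀ a ∈ Submodule.span ℝ S, ⟪a, w⟫ = (0:ℝ) := by
  intro a ha
  induction ha using Submodule.span_induction with
  | mem x hx => exact h x hx
  | zero => simp
  | add x y _ _ hx hy => rw [inner_add_left, hx, hy]; ring
  | smul t x _ hx => rw [real_inner_smul_left, hx]; ring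

lemma Bset_finite (A : κ → EuclideanSpace ℝ (Fin m)) (q : κ → ℝ) :
    (Bset A q).Finite := by
  classical
  apply Set.Finite.of_finite_image (f := fun π => {k | ⟪A k, π⟫ = q k})
  · exact Set.toFinite _
  · intro π₁ h₁ π₂ h₂ hact
    have hspan := h₁.2
    set w : EuclideanSpace ℝ (Fin m) := π₁ - π₂ with hw
    have hwo : ∀ a ∈ Submodule.span ℝ (A '' {k | ⟪A k, π₁⟫ = q k}), ⟪a, w⟫ = (0:ℝ) := by
      apply inner_eq_zero_of_mem_span
      rintro a ⟨k, hk, rfl⟩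
      have hk2 : ⟪A k, π₂⟫ = q k := by
        have hact' : {k | ⟪A k, π₁⟫ = q k} = {k | ⟪A k, π₂⟫ = q k} := hact
        have : k ∈ {k | ⟪A k, π₂⟫ = q k} := hact' ▸ hk
        exact this
      rw [hw, inner_sub_right, hk, hk2, sub_self]
    have : ⟪w, w⟫ = (0:ℝ) := hwo w (hspan ▸ Submodule.mem_top)
    have : w = 0 := by
      rwa [inner_self_eq_zero] at this
    rw [hw] at this
    exact sub_eq_zero.1 this

lemma purify (A : κ → EuclideanSpace ℝ (Fin m)) (q : κ → ℝ)
    (v : EuclideanSpace ℝ (Fin m))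
    (hrec : ∀ d : EuclideanSpace ℝ (Fin m), (∀ k, ⟪A k, d⟫ ≤ (0:ℝ)) → ⟪v, d⟫ ≤ (0:ℝ))
    (hnoline : ∀ d : EuclideanSpace ℝ (Fin m), (∀ k, ⟪A k, d⟫ = (0:ℝ)) → d = 0) :
    ∀ (N : ℕ) (π : EuclideanSpace ℝ (Fin m)), (∀ k, ⟪A k, π⟫ ≤ q k) →
      m ≤ Module.finrank ℝ
        (Submodule.span ℝ (A '' {k | ⟪A k, π⟫ = q k})) + N →
      ∃ π' ∈ Bset A q, ⟪v, π⟫ ≤ ⟪v, π'⟫ := by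
  classical
  intro N
  induction N with
  | zero =>
    intro π hfeas hrank
    refine ⟨π, ⟨hfeas, ?_⟩, le_rfl⟩
    apply Submodule.eq_top_of_finrank_eq
    have h1 : Module.finrank ℝ
        (Submodule.span ℝ (A '' {k | ⟪A k, π⟫ = q k})) ≤
        Module.finrank ℝ (EuclideanSpace ℝ (Fin m)) := Submodule.finrank_le _
    have h2 : Module.finrank ℝ (EuclideanSpace ℝ (Fin m)) = m := by
      rw [finrank_euclideanSpace, Fintype.card_fin]
    omega
  | succ N ih =>
    intro π hfeas hrank
    set W := Submodule.span ℝ (A '' {k | ⟪A k, π⟫ = q k}) with hW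
    by_cases htop : W = ⊤
    · exact ⟨π, ⟨hfeas, htop⟩, le_rfl⟩
    · -- pick a direction orthogonal to all active rows
      have hWo : Wᗮ ≠ ⊥ := by
        intro h
        exact htop (Submodule.orthogonal_eq_bot_iff.1 h)
      obtain ⟨d, hdW, hd0⟩ := (Submodule.ne_bot_iff _).1 hWo
      have hdact : ∀ k, ⟪A k, π⟫ = q k → ⟪A k, d⟫ = (0:ℝ) := by
        intro k hk
        exact (Submodule.mem_orthogonal W d).1 hdW (A k)
          (Submodule.subset_span ⟨k, hk, rfl⟩)
      -- find a good direction e among d and -d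
      have key : ∃ e : EuclideanSpace ℝ (Fin m), (e = d ∨ e = -d) ∧
          (∀ k, ⟪A k, π⟫ = q k → ⟪A k, e⟫ = (0:ℝ)) ∧ (0:ℝ) ≤ ⟪v, e⟫ ∧
          ∃ k, (0:ℝ) < ⟪A k, e⟫ := by
        by_cases hd1 : ∃ k, (0:ℝ) < ⟪A k, d⟫
        · by_cases hd2 : ∃ k, (0:ℝ) < ⟪A k, (-d : EuclideanSpace ℝ (Fin m))⟫
          · rcases le_total (0:ℝ) ⟪v, d⟫ with hv | hv
            · exact ⟨d, Or.inl rfl, hdact, hv, hd1⟩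
            · refine ⟨-d, Or.inr rfl,
                fun k hk => by rw [inner_neg_right, hdact k hk, neg_zero], ?_, hd2⟩
              rw [inner_neg_right]; linarith
          · push_neg at hd2
            have : ⟪v, (-d : EuclideanSpace ℝ (Fin m))⟫ ≤ 0 := hrec _ hd2
            rw [inner_neg_right] at this
            exact ⟨d, Or.inl rfl, hdact, by linarith, hd1⟩
        · push_neg at hd1
          have hvd : ⟪v, d⟫ ≤ 0 := hrec _ hd1
          by_cases hd2 : ∃ k, (0:ℝ) < ⟪A k, (-d : EuclideanSpace ℝ (Fin m))⟫
          · refine ⟨-d, Or.inr rfl,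
              fun k hk => by rw [inner_neg_right, hdact k hk, neg_zero],
              by rw [inner_neg_right]; linarith, hd2⟩
          · push_neg at hd2
            exfalso
            apply hd0
            apply hnoline
            intro k
            have h1 := hd1 k
            have h2 := hd2 k
            rw [inner_neg_right] at h2
            linarith
      obtain ⟨e, hed, heact, hve, ke, hke⟩ := key
      -- line search
      set T := univ.filter (fun k => (0:ℝ) < ⟪A k, e⟫) with hT
      have hTne : T.Nonempty := ⟨ke, by rw [hT, Finset.mem_filter]; exact ⟨Finset.mem_univ _, hke⟩⟩
      obtain ⟨k₀, hk₀T, hk₀min⟩ :=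
        Finset.exists_min_image T (fun k => (q k - ⟪A k, π⟫) / ⟪A k, e⟫) hTne
      have hk₀pos : (0:ℝ) < ⟪A k₀, e⟫ := by
        rw [hT, Finset.mem_filter] at hk₀T; exact hk₀T.2
      set t : ℝ := (q k₀ - ⟪A k₀, π⟫) / ⟪A k₀, e⟫ with ht
      have ht0 : 0 ≤ t := div_nonneg (by linarith [hfeas k₀]) hk₀pos.le
      set π' : EuclideanSpace ℝ (Fin m) := π + t • e with hπ'
      have hip : ∀ k, ⟪A k, π'⟫ = ⟪A k, π⟫ + t * ⟪A k, e⟫ := by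
        intro k
        rw [hπ', inner_add_right, real_inner_smul_right]
      have hfeas' : ∀ k, ⟪A k, π'⟫ ≤ q k := by
        intro k
        rw [hip k]
        rcases le_or_gt ⟪A k, e⟫ 0 with hk | hk
        · have : t * ⟪A k, e⟫ ≤ 0 := mul_nonpos_of_nonneg_of_nonpos ht0 hk
          linarith [hfeas k]
        · have hmin := hk₀min k (by rw [hT, Finset.mem_filter]; exact ⟨Finset.mem_univ _, hk⟩)
          have : t * ⟪A k, e⟫ ≤ q k - ⟪A k, π⟫ := by
            rw [← le_div_iff₀ hk, ht]; exact hmin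
          linarith
      have hobj' : ⟪v, π⟫ ≤ ⟪v, π'⟫ := by
        rw [hπ', inner_add_right, real_inner_smul_right]
        nlinarith
      -- the active set strictly grows in rank
      have hactsub : {k | ⟪A k, π⟫ = q k} ⊆ {k | ⟪A k, π'⟫ = q k} := by
        intro k hk
        have : ⟪A k, e⟫ = (0:ℝ) := heact k hk
        show ⟪A k, π'⟫ = q k
        rw [hip k, this, mul_zero, add_zero]; exact hk
      have hk₀act : ⟪A k₀, π'⟫ = q k₀ := by
        rw [hip k₀, ht, div_mul_cancel₀ _ hk₀pos.ne']
        ring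
      have hWlt : W < Submodule.span ℝ (A '' {k | ⟪A k, π'⟫ = q k}) := by
        constructor
        · exact Submodule.span_mono (Set.image_mono hactsub)
        · intro hle
          have : A k₀ ∈ W := hle (Submodule.subset_span ⟨k₀, hk₀act, rfl⟩)
          have hzero := (Submodule.mem_orthogonal W d).1 hdW (A k₀) this
          rcases hed with rfl | rfl
          · rw [hzero] at hk₀pos; exact lt_irrefl _ hk₀pos
          · rw [inner_neg_right, hzero, neg_zero] at hk₀pos
            exact lt_irrefl _ hk₀pos
      have hrank' : m ≤ Module.finrank ℝ
          (Submodule.span ℝ (A '' {k | ⟪A k, π'⟫ = q k})) + N := by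
        have := Submodule.finrank_lt_finrank_of_lt hWlt
        omega
      obtain ⟨π'', hπ''B, hπ''obj⟩ := ih π' hfeas' hrank'
      exact ⟨π'', hπ''B, hobj'.trans hπ''obj⟩

end Purify


open Finset

section Key

variable {m n : ℕ}

lemma einner (a b : EuclideanSpace ℝ (Fin m)) : ⟪a, b⟫ = ∑ j, a j * b j := by
  simp [PiLp.inner_apply, RCLike.inner_apply, conj_trivial]
  exact Finset.sum_congr rfl (fun _ _ => mul_comm _ _)

lemma coord_le_norm (π : EuclideanSpace ℝ (Fin m)) (j : Fin m) : |π j| ≤ ‖π‖ := by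
  rw [EuclideanSpace.norm_eq]
  rw [← Real.sqrt_sq_eq_abs]
  apply Real.sqrt_le_sqrt
  have : |π j| ^ 2 ≤ ∑ i, ‖π i‖ ^ 2 := by
    have := Finset.single_le_sum (f := fun i => ‖π i‖ ^ 2)
      (fun i _ => sq_nonneg _) (Finset.mem_univ j)
    simpa [Real.norm_eq_abs, sq_abs] using this
  simpa [sq_abs] using this

/-- weak duality -/
lemma weak_dual (D : Matrix (Fin m) (Fin n) ℝ) (c : Fin n → ℝ) {π v : Fin m → ℝ}
    {u : Fin n → ℝ} (hπ : ∀ j, π j ≤ 0) (hπc : ∀ i, ∑ j, D j i * π j ≤ c i)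
    (hu : ∀ i, 0 ≤ u i) (hDu : ∀ j, D.mulVec u j ≤ v j) :
    ∑ j, v j * π j ≤ ∑ i, c i * u i := by
  refine (lp_core D hπ hu hDu).trans ?_
  exact Finset.sum_le_sum (fun i _ => mul_le_mul_of_nonneg_right (hπc i) (hu i))

/-- The key one-sided Lipschitz estimate for the LP value function. -/
lemma lp_key (D : Matrix (Fin m) (Fin n) ℝ) (c : Fin n → ℝ)
    (hdualfeas : ∃ π : Fin m → ℝ, (∀ j, π j ≤ 0) ∧ ∀ i, ∑ j, D j i * π j ≤ c i) :
    ∃ R : ℝ, 0 ≤ R ∧ ∀ (v v' : Fin m → ℝ) (δ : ℝ),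
      (∀ j, |v j - v' j| ≤ δ) →
      (∃ u : Fin n → ℝ, (∀ i, 0 ≤ u i) ∧ ∀ j, D.mulVec u j ≤ v j) →
      (∃ u : Fin n → ℝ, (∀ i, 0 ≤ u i) ∧ ∀ j, D.mulVec u j ≤ v' j) →
      sInf ((fun u : Fin n → ℝ => ∑ i, c i * u i) ''
          {u | (∀ i, 0 ≤ u i) ∧ ∀ j, D.mulVec u j ≤ v j})
        ≤ sInf ((fun u : Fin n → ℝ => ∑ i, c i * u i) ''
          {u | (∀ i, 0 ≤ u i) ∧ ∀ j, D.mulVec u j ≤ v' j}) + (m * R) * δ := by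
  classical
  -- the dual constraint system
  set A : (Fin m ⊕ Fin n) → EuclideanSpace ℝ (Fin m) :=
    Sum.elim (fun j => EuclideanSpace.single j 1)
      (fun i => (WithLp.equiv 2 (Fin m → ℝ)).symm (fun j => D j i)) with hA
  set q : (Fin m ⊕ Fin n) → ℝ := Sum.elim (fun _ => 0) c with hq
  have hAinl : ∀ (j : Fin m) (π : EuclideanSpace ℝ (Fin m)), ⟪A (Sum.inl j), π⟫ = π j := by
    intro j π
    rw [einner]
    simp [hA, EuclideanSpace.single_apply]
  have hAinr : ∀ (i : Fin n) (π : EuclideanSpace ℝ (Fin m)),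
      ⟪A (Sum.inr i), π⟫ = ∑ j, D j i * π j := by
    intro i π
    rw [einner]
    simp [hA, WithLp.equiv_symm_apply, WithLp.ofLp_toLp]
  -- bound on basic points
  obtain ⟨R₀, hR₀⟩ := Set.Finite.bddAbove (Set.Finite.image (fun π => ‖π‖) (Bset_finite A q))
  set R : ℝ := max R₀ 0 with hR
  refine ⟨R, le_max_right _ _, ?_⟩
  intro v v' δ hδ hfeas hfeas'
  obtain ⟨π₀, hπ₀1, hπ₀2⟩ := hdualfeas
  set obj : (Fin n → ℝ) → ℝ := fun u => ∑ i, c i * u i with hobj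
  set S := obj '' {u | (∀ i, 0 ≤ u i) ∧ ∀ j, D.mulVec u j ≤ v j} with hS
  set S' := obj '' {u | (∀ i, 0 ≤ u i) ∧ ∀ j, D.mulVec u j ≤ v' j} with hS'
  have hSne : S.Nonempty := by
    obtain ⟨u, hu⟩ := hfeas; exact ⟨obj u, u, hu, rfl⟩
  have hS'ne : S'.Nonempty := by
    obtain ⟨u, hu⟩ := hfeas'; exact ⟨obj u, u, hu, rfl⟩
  have hbddS : BddBelow S := by
    refine ⟨∑ j, v j * π₀ j, ?_⟩
    rintro y ⟨u, hu, rfl⟩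
    exact weak_dual D c hπ₀1 hπ₀2 hu.1 hu.2
  by_contra hcon
  push_neg at hcon
  set γ : ℝ := sInf S' + (m * R) * δ with hγ
  have hno : ¬ ∃ u : Fin n → ℝ, (∀ i, 0 ≤ u i) ∧ (∀ j, D.mulVec u j ≤ v j) ∧
      obj u ≤ γ := by
    rintro ⟨u, hu1, hu2, hle⟩
    have : sInf S ≤ obj u := csInf_le hbddS ⟨u, ⟨hu1, hu2⟩, rfl⟩
    exact absurd hcon (by push_neg; linarith)
  obtain ⟨π, hπ1, hπ2, hπ3⟩ := lp_exists_dual D c v γ hfeas hno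
  set πE : EuclideanSpace ℝ (Fin m) := (WithLp.equiv 2 (Fin m → ℝ)).symm π with hπE
  have hπEapp : ∀ j, πE j = π j := fun j => rfl
  have hfeasE : ∀ k, ⟪A k, πE⟫ ≤ q k := by
    rintro (j | i)
    · rw [hAinl]; simpa [hπEapp, hq] using hπ1 j
    · rw [hAinr]; simpa [hπEapp, hq] using hπ2 i
  set vE : EuclideanSpace ℝ (Fin m) := (WithLp.equiv 2 (Fin m → ℝ)).symm v with hvE
  have hvEapp : ∀ j, vE j = v j := fun j => rfl
  have hrec : ∀ d : EuclideanSpace ℝ (Fin m),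
      (∀ k, ⟪A k, d⟫ ≤ (0:ℝ)) → ⟪vE, d⟫ ≤ (0:ℝ) := by
    intro d hd
    obtain ⟨u₀, hu₀1, hu₀2⟩ := hfeas
    have hd1 : ∀ j, d j ≤ 0 := fun j => by
      have := hd (Sum.inl j); rwa [hAinl] at this
    have hd2 : ∀ i, ∑ j, D j i * d j ≤ 0 := fun i => by
      have := hd (Sum.inr i); rwa [hAinr] at this
    rw [einner]
    have h1 : ∑ j, vE j * d j ≤ ∑ i, (∑ j, D j i * d j) * u₀ i := by
      have := lp_core D (π := fun j => d j) (v := v) (u := u₀) hd1 hu₀1 hu₀2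
      simpa [hvEapp] using this
    refine h1.trans (Finset.sum_nonpos (fun i _ =>
      mul_nonpos_of_nonpos_of_nonneg (hd2 i) (hu₀1 i)))
  have hnoline : ∀ d : EuclideanSpace ℝ (Fin m),
      (∀ k, ⟪A k, d⟫ = (0:ℝ)) → d = 0 := by
    intro d hd
    ext j
    have := hd (Sum.inl j); rwa [hAinl] at this
  obtain ⟨π', hπ'B, hπ'obj⟩ := purify A q vE hrec hnoline m πE hfeasE
    (Nat.le_add_left _ _)
  -- π' is dual feasible
  have hπ'1 : ∀ j, π' j ≤ 0 := fun j => by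
    have := hπ'B.1 (Sum.inl j); rwa [hAinl] at this
  have hπ'2 : ∀ i, ∑ j, D j i * π' j ≤ c i := fun i => by
    have := hπ'B.1 (Sum.inr i); rwa [hAinr] at this
  -- bound on coordinates of π'
  have hπ'R : ∀ j, |π' j| ≤ R := by
    intro j
    refine (coord_le_norm π' j).trans ?_
    have h1 : ‖π'‖ ≤ R₀ := hR₀ ⟨π', hπ'B, rfl⟩
    exact h1.trans (le_max_left _ _)
  -- chain of inequalities
  have hchain1 : γ < ∑ j, v j * π' j := by
    have h1 : ⟪vE, πE⟫ = ∑ j, v j * π j := by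
      rw [einner]; simp [hvEapp, hπEapp]
    have h2 : ⟪vE, π'⟫ = ∑ j, v j * π' j := by
      rw [einner]; simp [hvEapp]
    calc γ < ∑ j, v j * π j := hπ3
    _ = ⟪vE, πE⟫ := h1.symm
    _ ≤ ⟪vE, π'⟫ := hπ'obj
    _ = ∑ j, v j * π' j := h2
  have hsplit : ∑ j, v j * π' j
      = ∑ j, v' j * π' j + ∑ j, (v j - v' j) * π' j := by
    rw [← Finset.sum_add_distrib]
    apply Finset.sum_congr rfl; intro j _; ring
  have hwd : ∑ j, v' j * π' j ≤ sInf S' := by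
    apply le_csInf hS'ne
    rintro y ⟨u, hu, rfl⟩
    exact weak_dual D c hπ'1 hπ'2 hu.1 hu.2
  have hperturb : ∑ j, (v j - v' j) * π' j ≤ (m * R) * δ := by
    have h1 : ∑ j, (v j - v' j) * π' j ≤ ∑ j : Fin m, R * δ := by
      apply Finset.sum_le_sum
      intro j _
      have hδ0 : 0 ≤ δ := le_trans (abs_nonneg _) (hδ j)
      calc (v j - v' j) * π' j ≤ |(v j - v' j) * π' j| := le_abs_self _
      _ = |v j - v' j| * |π' j| := abs_mul _ _
      _ ≤ δ * R := mul_le_mul (hδ j) (hπ'R j) (abs_nonneg _) hδ0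
      _ = R * δ := mul_comm _ _
    rw [Finset.sum_const, Finset.card_univ, Fintype.card_fin, nsmul_eq_mul] at h1
    calc ∑ j, (v j - v' j) * π' j ≤ (m : ℝ) * (R * δ) := h1
    _ = (m * R) * δ := by ring
  have : γ < γ := by
    calc γ < ∑ j, v j * π' j := hchain1
    _ = ∑ j, v' j * π' j + ∑ j, (v j - v' j) * π' j := hsplit
    _ ≤ sInf S' + (m * R) * δ := add_le_add hwd hperturb
    _ = γ := hγ.symm
  exact lt_irrefl _ this

end Key


open Finset

/-- Lipschitz continuity of the LP value function
`h(x) = inf {⟨c, u⟩ : u ≥ 0, D u ≤ b - C x}` with respect to the right-hand-side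
parameter `x`: if the primal feasible set is nonempty for every `x ∈ X` and the
dual feasible set `{π ≤ 0 : Dᵀ π ≤ c}` is nonempty, then `h` is finite on `X`
(the infimum is over a nonempty set bounded below) and there is `L > 0`
(depending only on `c`, `C`, `D`) with `|h(x) - h(x')| ≤ L ‖x - x'‖` on `X`. -/
theorem lp_value_function_lipschitz (m n p : ℕ)
    (D : Matrix (Fin m) (Fin n) ℝ) (C : Matrix (Fin m) (Fin p) ℝ)
    (b : Fin m → ℝ) (c : Fin n → ℝ) (X : Set (EuclideanSpace ℝ (Fin p)))
    (hprimal : ∀ x ∈ X, ({u : Fin n → ℝ | (∀ i, 0 ≤ u i) ∧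
        ∀ j, D.mulVec u j ≤ b j - C.mulVec x j}).Nonempty)
    (hdual : ({π : Fin m → ℝ | (∀ j, π j ≤ 0) ∧
        ∀ i, D.transpose.mulVec π i ≤ c i}).Nonempty) :
    (∀ x ∈ X,
      ((fun u : Fin n → ℝ => ∑ i, c i * u i) ''
          {u : Fin n → ℝ | (∀ i, 0 ≤ u i) ∧
            ∀ j, D.mulVec u j ≤ b j - C.mulVec x j}).Nonempty ∧
      BddBelow ((fun u : Fin n → ℝ => ∑ i, c i * u i) ''
          {u : Fin n → ℝ | (∀ i, 0 ≤ u i) ∧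
            ∀ j, D.mulVec u j ≤ b j - C.mulVec x j})) ∧
    ∃ L : ℝ, 0 < L ∧ ∀ x ∈ X, ∀ x' ∈ X,
      |sInf ((fun u : Fin n → ℝ => ∑ i, c i * u i) ''
          {u : Fin n → ℝ | (∀ i, 0 ≤ u i) ∧
            ∀ j, D.mulVec u j ≤ b j - C.mulVec x j}) -
        sInf ((fun u : Fin n → ℝ => ∑ i, c i * u i) ''
          {u : Fin n → ℝ | (∀ i, 0 ≤ u i) ∧
            ∀ j, D.mulVec u j ≤ b j - C.mulVec x' j})|
        ≤ L * ‖x - x'‖ := by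
  classical
  -- translate the dual feasibility
  obtain ⟨π₀, hπ₀1, hπ₀2'⟩ := hdual
  have hπ₀2 : ∀ i, ∑ j, D j i * π₀ j ≤ c i := by
    intro i
    have := hπ₀2' i
    simpa [Matrix.mulVec, dotProduct, Matrix.transpose_apply,
      mul_comm] using this
  have hdualfeas : ∃ π : Fin m → ℝ, (∀ j, π j ≤ 0) ∧
      ∀ i, ∑ j, D j i * π j ≤ c i := ⟨π₀, hπ₀1, hπ₀2⟩
  constructor
  · intro x hx
    constructor
    · obtain ⟨u, hu⟩ := hprimal x hx
      exact ⟨_, u, hu, rfl⟩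
    · refine ⟨∑ j, (b j - C.mulVec x j) * π₀ j, ?_⟩
      rintro y ⟨u, hu, rfl⟩
      exact weak_dual D c hπ₀1 hπ₀2 hu.1 hu.2
  · obtain ⟨R, hR, hkey⟩ := lp_key D c hdualfeas
    -- bound for the rows of C
    set row : Fin m → EuclideanSpace ℝ (Fin p) :=
      fun j => (WithLp.equiv 2 (Fin p → ℝ)).symm (fun k => C j k) with hrow
    set M : ℝ := ∑ j, ‖row j‖ with hM
    have hM0 : 0 ≤ M := Finset.sum_nonneg (fun j _ => norm_nonneg _)
    have hrowle : ∀ j, ‖row j‖ ≤ M :=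
      fun j => Finset.single_le_sum (f := fun j => ‖row j‖)
        (fun j _ => norm_nonneg _) (Finset.mem_univ j)
    refine ⟨(m * R) * M + 1, ?_, ?_⟩
    · have : (0:ℝ) ≤ (m * R) * M :=
        mul_nonneg (mul_nonneg (Nat.cast_nonneg m) hR) hM0
      linarith
    intro x hx x' hx'
    -- the perturbation bound
    have hpert : ∀ (y y' : EuclideanSpace ℝ (Fin p)), ∀ j : Fin m,
        |(b j - C.mulVec y j) - (b j - C.mulVec y' j)| ≤ M * ‖y - y'‖ := by
      intro y y' j
      have h0 : (b j - C.mulVec y j) - (b j - C.mulVec y' j)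
          = C.mulVec y' j - C.mulVec y j := by ring
      have h2 : C.mulVec y' j - C.mulVec y j = ∑ k, C j k * (y' k - y k) := by
        simp only [Matrix.mulVec, dotProduct, ← Finset.sum_sub_distrib]
        apply Finset.sum_congr rfl; intro k _; ring
      have h3 : ⟪row j, y' - y⟫ = ∑ k, C j k * (y' k - y k) := by
        rw [einner]
        apply Finset.sum_congr rfl; intro k _
        have hr : row j k = C j k := rfl
        have hs : (y' - y) k = y' k - y k := rfl
        rw [hr, hs]
      rw [h0, h2, ← h3]
      calc |⟪row j, y' - y⟫| ≤ ‖row j‖ * ‖y' - y‖ := abs_real_inner_le_norm _ _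
      _ ≤ M * ‖y - y'‖ := by
          rw [norm_sub_rev]
          exact mul_le_mul_of_nonneg_right (hrowle j) (norm_nonneg _)
    have hb1 : sInf ((fun u : Fin n → ℝ => ∑ i, c i * u i) ''
          {u : Fin n → ℝ | (∀ i, 0 ≤ u i) ∧
            ∀ j, D.mulVec u j ≤ b j - C.mulVec x j})
        ≤ sInf ((fun u : Fin n → ℝ => ∑ i, c i * u i) ''
          {u : Fin n → ℝ | (∀ i, 0 ≤ u i) ∧
            ∀ j, D.mulVec u j ≤ b j - C.mulVec x' j})
          + (m * R) * (M * ‖x - x'‖) :=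
      hkey (fun j => b j - C.mulVec x j) (fun j => b j - C.mulVec x' j)
        (M * ‖x - x'‖) (fun j => hpert x x' j) (hprimal x hx) (hprimal x' hx')
    have hb2 : sInf ((fun u : Fin n → ℝ => ∑ i, c i * u i) ''
          {u : Fin n → ℝ | (∀ i, 0 ≤ u i) ∧
            ∀ j, D.mulVec u j ≤ b j - C.mulVec x' j})
        ≤ sInf ((fun u : Fin n → ℝ => ∑ i, c i * u i) ''
          {u : Fin n → ℝ | (∀ i, 0 ≤ u i) ∧
            ∀ j, D.mulVec u j ≤ b j - C.mulVec x j})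
          + (m * R) * (M * ‖x - x'‖) :=
      hkey (fun j => b j - C.mulVec x' j) (fun j => b j - C.mulVec x j)
        (M * ‖x - x'‖)
        (fun j => by rw [norm_sub_rev x x']; exact hpert x' x j)
        (hprimal x' hx') (hprimal x hx)
    rw [abs_sub_le_iff]
    have hfac : (m * R) * (M * ‖x - x'‖) = ((m * R) * M) * ‖x - x'‖ := by ring
    have hmono : ((m * R) * M) * ‖x - x'‖ ≤ ((m * R) * M + 1) * ‖x - x'‖ :=
      mul_le_mul_of_nonneg_right (by linarith) (norm_nonneg _)
    constructor
    · linarith [hb1, hfac, hmono]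
    · linarith [hb2, hfac, hmono]
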